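/- Let w be a finite string over a linearly ordered alphabet, let p_0 < p_1 < … < p_k be a periodic progression in w (i.e., the factors w[p_i..p_{i+1}−1] for 0 ≤ i < k are all equal), and let j be a position with p_k ≤ j ≤ |w|. Then for any finite strings s, t and any natural number ℓ, the set of indices i ∈ {0, …, k} such that s.take ℓ ≤lex w[p_i..j].take ℓ and w[p_i..j].take ℓ ≤lex t.take ℓ is a (possibly empty) set of consecutive integers, i.e., of the form {a, a+1, …, b}. -/

import Mathlib

/-- The factor `w[i..j]` of `w` (1-indexed, characters `i` through `j`). -/
def substr {α : Type*} (w : List α) (i j : ℕ) : List α :=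
  (w.take j).drop (i - 1)

/-- Non-strict lexicographic order on lists. -/
def lexLe {α : Type*} [LinearOrder α] (u v : List α) : Prop :=
  List.Lex (· < ·) u v ∨ u = v

section Aux

variable {α : Type*} [LinearOrder α]

theorem lexLe_refl (a : List α) : lexLe a a := Or.inr rfl

theorem lexLe_trans {a b c : List α} (h1 : lexLe a b) (h2 : lexLe b c) : lexLe a c := by
  rcases h1 with h1 | rfl
  · rcases h2 with h2 | rfl
    · exact Or.inl (lt_trans (α := List α) h1 h2)
    · exact Or.inl h1
  · exact h2

theorem lexLe_total (a b : List α) : lexLe a b ∨ lexLe b a := by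
  rcases lt_trichotomy a b with h | h | h
  · exact Or.inl (Or.inl h)
  · exact Or.inl (Or.inr h)
  · exact Or.inr (Or.inl h)

theorem lex_append_left {a b : List α} (u : List α) (h : List.Lex (· < ·) a b) :
    List.Lex (· < ·) (u ++ a) (u ++ b) := by
  induction u with
  | nil => exact h
  | cons x xs ih => exact List.Lex.cons ih

theorem lexLe_append_left {a b : List α} (u : List α) (h : lexLe a b) :
    lexLe (u ++ a) (u ++ b) := by
  rcases h with h | rfl
  · exact Or.inl (lex_append_left u h)
  · exact Or.inr rfl

theorem lexLe_take {a b : List α} (h : lexLe a b) (n : ℕ) :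
    lexLe (a.take n) (b.take n) := by
  rcases h with h | rfl
  · induction h generalizing n with
    | nil =>
      cases n with
      | zero => exact Or.inr rfl
      | succ m => exact Or.inl List.Lex.nil
    | @cons x l₁ l₂ _ ih =>
      cases n with
      | zero => exact Or.inr rfl
      | succ m =>
        simp only [List.take_succ_cons]
        rcases ih m with h' | h'
        · exact Or.inl (List.Lex.cons h')
        · exact Or.inr (by rw [h'])
    | @rel x y l₁ l₂ hxy =>
      cases n with
      | zero => exact Or.inr rfl
      | succ m => exact Or.inl (List.Lex.rel hxy)
  · exact Or.inr rfl

theorem drop_eq_take_drop_append (l : List α) {a b : ℕ} (hab : a ≤ b) :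
    l.drop a = (l.take b).drop a ++ l.drop b := by
  rcases le_or_gt a l.length with hl | hl
  · conv_lhs => rw [← List.take_append_drop b l]
    rw [List.drop_append]
    congr 1
    have : a - (l.take b).length = 0 := by
      simp only [List.length_take]
      omega
    rw [this, List.drop_zero]
  · have hb : l.length ≤ b := le_trans (le_of_lt hl) hab
    rw [List.drop_eq_nil_of_le (le_of_lt hl), List.drop_eq_nil_of_le hb,
      List.drop_eq_nil_of_le]
    · simp
    · simp only [List.length_take]
      omega

/-- If a predicate is "convex" on `{0,…,k}`, then it is an interval. -/
theorem convex_interval (k : ℕ) (C : ℕ → Prop)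
    (hconv : ∀ i m i', i ≤ m → m ≤ i' → i' ≤ k → C i → C i' → C m) :
    ∃ a b : ℕ, ∀ i ≤ k, C i ↔ (a ≤ i ∧ i ≤ b) := by
  classical
  by_cases hne : ∃ i ≤ k, C i
  · obtain ⟨i₀, hi₀k, hi₀⟩ := hne
    have hi₀S : i₀ ∈ (Finset.range (k + 1)).filter C := by
      rw [Finset.mem_filter, Finset.mem_range]
      exact ⟨by omega, hi₀⟩
    have hSne : ((Finset.range (k + 1)).filter C).Nonempty := ⟨i₀, hi₀S⟩
    refine ⟨((Finset.range (k + 1)).filter C).min' hSne,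
      ((Finset.range (k + 1)).filter C).max' hSne, fun i hik => ?_⟩
    constructor
    · intro hCi
      have hiS : i ∈ (Finset.range (k + 1)).filter C := by
        rw [Finset.mem_filter, Finset.mem_range]
        exact ⟨by omega, hCi⟩
      exact ⟨Finset.min'_le _ i hiS, Finset.le_max' _ i hiS⟩
    · rintro ⟨ha, hb⟩
      have hminS := Finset.min'_mem _ hSne
      have hmaxS := Finset.max'_mem _ hSne
      rw [Finset.mem_filter, Finset.mem_range] at hminS hmaxS
      exact hconv _ i _ ha hb (by omega) hminS.2 hmaxS.2
  · refine ⟨1, 0, fun i hik => ?_⟩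
    constructor
    · intro hCi
      exact absurd ⟨i, hik, hCi⟩ hne
    · rintro ⟨ha, hb⟩
      omega

end Aux

/-- Let `p 0 < p 1 < … < p k` be a periodic progression in `w` and `p k ≤ j ≤ |w|`.
    Then for any strings `s`, `t` and any `ℓ`, the set of indices `i ∈ {0, …, k}`
    with `s.take ℓ ≤lex (w[p i..j]).take ℓ ≤lex t.take ℓ` is a set of consecutive
    integers `{a, …, b}`. -/
theorem periodic_progression_interval_consecutive {α : Type*} [LinearOrder α]
    (w s t : List α) (ℓ k j : ℕ) (p : ℕ → ℕ)
    (hpos : 1 ≤ p 0)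
    (hmono : ∀ i < k, p i < p (i + 1))
    (hper : ∀ i, i + 1 < k →
      substr w (p i) (p (i + 1) - 1) = substr w (p (i + 1)) (p (i + 2) - 1))
    (hkj : p k ≤ j) (hjw : j ≤ w.length) :
    ∃ a b : ℕ, ∀ i ≤ k,
      ((lexLe (s.take ℓ) ((substr w (p i) j).take ℓ) ∧
        lexLe ((substr w (p i) j).take ℓ) (t.take ℓ)) ↔ (a ≤ i ∧ i ≤ b)) := by
  -- p is monotone up to k
  have hpmono : ∀ i i', i ≤ i' → i' ≤ k → p i ≤ p i' := by
    intro i i' hii' hi'k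
    induction i' with
    | zero =>
      have hi : i = 0 := by omega
      rw [hi]
    | succ n ih =>
      rcases Nat.lt_or_ge i (n + 1) with h | h
      · have : p i ≤ p n := ih (by omega) (by omega)
        exact le_trans this (le_of_lt (hmono n (by omega)))
      · have : i = n + 1 := by omega
        rw [this]
  -- decomposition: for i < k, substr w (p i) j = block i ++ substr w (p (i+1)) j
  have hdecomp : ∀ i < k,
      substr w (p i) j = substr w (p i) (p (i + 1) - 1) ++ substr w (p (i + 1)) j := by
    intro i hik
    have hlt := hmono i hik
    have hle : p (i + 1) ≤ j := le_trans (hpmono (i + 1) k (by omega) le_rfl) hkj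
    unfold substr
    have h1 : p i - 1 ≤ p (i + 1) - 1 := by omega
    have h2 : (w.take j).take (p (i + 1) - 1) = w.take (p (i + 1) - 1) := by
      rw [List.take_take]
      congr 1
      omega
    rw [drop_eq_take_drop_append (w.take j) h1, h2]
  -- all blocks below k are equal
  have hblocks : ∀ i < k, substr w (p i) (p (i + 1) - 1) = substr w (p 0) (p 1 - 1) := by
    intro i hik
    induction i with
    | zero => rfl
    | succ n ih =>
      have := hper n (by omega)
      rw [← this]
      exact ih (by omega)
  set u := substr w (p 0) (p 1 - 1) with hu
  set x : ℕ → List α := fun i => substr w (p i) j with hx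
  have hstep : ∀ i < k, x i = u ++ x (i + 1) := by
    intro i hik
    rw [hx]
    simp only
    rw [hdecomp i hik, hblocks i hik]
  -- adjacent chain: either x is (nonstrictly) decreasing in i, or increasing
  have hchain : (∀ i < k, lexLe (x (i + 1)) (x i)) ∨ (∀ i < k, lexLe (x i) (x (i + 1))) := by
    rcases Nat.eq_zero_or_pos k with hk0 | hkpos
    · left; intro i hik; omega
    rcases lexLe_total (x k) (u ++ x k) with hc | hc
    · left
      -- downward induction on k - i
      intro i hik
      have key : ∀ n i, i < k → k - i = n → lexLe (x (i + 1)) (x i) := by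
        intro n
        induction n with
        | zero => intro i hik h; omega
        | succ m ih =>
          intro i hik h
          rcases Nat.lt_or_ge (i + 1) k with h1 | h1
          · have hprev := ih (i + 1) h1 (by omega)
            have h3 : lexLe (x (i + 1 + 1)) (u ++ x (i + 1 + 1)) := by
              rw [← hstep (i + 1) h1]; exact hprev
            rw [hstep i hik, hstep (i + 1) h1]
            exact lexLe_append_left u h3
          · have : i + 1 = k := by omega
            rw [hstep i hik, this]
            exact hc
      exact key (k - i) i hik rfl
    · right
      intro i hik
      have key : ∀ n i, i < k → k - i = n → lexLe (x i) (x (i + 1)) := by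
        intro n
        induction n with
        | zero => intro i hik h; omega
        | succ m ih =>
          intro i hik h
          rcases Nat.lt_or_ge (i + 1) k with h1 | h1
          · have hprev := ih (i + 1) h1 (by omega)
            have h3 : lexLe (u ++ x (i + 1 + 1)) (x (i + 1 + 1)) := by
              rw [← hstep (i + 1) h1]; exact hprev
            rw [hstep i hik, hstep (i + 1) h1]
            exact lexLe_append_left u h3
          · have : i + 1 = k := by omega
            rw [hstep i hik, this]
            exact hc
      exact key (k - i) i hik rfl
  set y : ℕ → List α := fun i => (x i).take ℓ with hy
  have hychain : (∀ i i', i ≤ i' → i' ≤ k → lexLe (y i') (y i)) ∨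
      (∀ i i', i ≤ i' → i' ≤ k → lexLe (y i) (y i')) := by
    rcases hchain with hc | hc
    · left
      intro i i' hii' hi'k
      induction i' with
      | zero =>
        have : i = 0 := by omega
        rw [this]; exact lexLe_refl _
      | succ n ih =>
        rcases Nat.lt_or_ge i (n + 1) with h | h
        · have h1 : lexLe (y n) (y i) := ih (by omega) (by omega)
          have h2 : lexLe (y (n + 1)) (y n) := lexLe_take (hc n (by omega)) ℓ
          exact lexLe_trans h2 h1
        · have : i = n + 1 := by omega
          rw [this]; exact lexLe_refl _
    · right
      intro i i' hii' hi'k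
      induction i' with
      | zero =>
        have : i = 0 := by omega
        rw [this]; exact lexLe_refl _
      | succ n ih =>
        rcases Nat.lt_or_ge i (n + 1) with h | h
        · have h1 : lexLe (y i) (y n) := ih (by omega) (by omega)
          have h2 : lexLe (y n) (y (n + 1)) := lexLe_take (hc n (by omega)) ℓ
          exact lexLe_trans h1 h2
        · have : i = n + 1 := by omega
          rw [this]; exact lexLe_refl _
  -- the condition is convex
  set C : ℕ → Prop := fun i => lexLe (s.take ℓ) (y i) ∧ lexLe (y i) (t.take ℓ) with hC
  have hconv : ∀ i m i', i ≤ m → m ≤ i' → i' ≤ k → C i → C i' → C m := by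
    intro i m i' him hmi' hi'k hCi hCi'
    rcases hychain with hmon | hmon
    · exact ⟨lexLe_trans hCi'.1 (hmon m i' hmi' hi'k),
        lexLe_trans (hmon i m him (by omega)) hCi.2⟩
    · exact ⟨lexLe_trans hCi.1 (hmon i m him (by omega)),
        lexLe_trans (hmon m i' hmi' hi'k) hCi'.2⟩
  exact convex_interval k C hconv
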